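/- Let G be a group, H ≤ G a finite-index normal subgroup, and for indices i ≠ j let U_{ij} = {r ∈ R : Id + r·e_{ij} ∈ H}, where G = EL_d(R) ⊆ GL_d(R) for a commutative unital ring R and d ≥ 3. Then U := U_{ij} is a two-sided ideal of R independent of (i,j), and R/U is finite. -/

import Mathlib

/-- The group `EL_d(R)`: the subgroup of `GL_d(R)` generated by the elementary
matrices `Id + r·e_{ij}`, `i ≠ j`. -/
def EL (R : Type*) [CommRing R] (d : ℕ) : Subgroup (Matrix (Fin d) (Fin d) R)ˣ :=
  Subgroup.closure {u : (Matrix (Fin d) (Fin d) R)ˣ |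
    ∃ (i j : Fin d) (r : R), i ≠ j ∧
      (u : Matrix (Fin d) (Fin d) R) = 1 + Matrix.single i j r}

namespace ELAux

open Matrix

variable {R : Type*} [CommRing R] {d : ℕ}

lemma st_neg (i j : Fin d) (r : R) :
    single i j (-r) = -single i j r := by
  ext a b; simp [single]; split_ifs <;> simp

lemma M_mul (i j : Fin d) (hij : i ≠ j) (r s : R) :
    (1 + single i j r) * (1 + single i j s)
      = 1 + single i j (r + s) := by
  simp only [add_mul, mul_add, one_mul, mul_one, single_add,
    Matrix.single_mul_single_of_ne, ne_eq, Ne.symm hij, not_false_eq_true,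
    add_zero, zero_add]
  abel

lemma comm_matrix (i j k : Fin d) (hij : i ≠ j) (hik : i ≠ k) (hkj : k ≠ j) (r s : R) :
    (1 + single i k r) * (1 + single k j s) *
      (1 + single i k (-r)) * (1 + single k j (-s))
      = 1 + single i j (r * s) := by
  simp only [add_mul, mul_add, one_mul, mul_one,
    Matrix.single_mul_single_same,
    Matrix.single_mul_single_of_ne, ne_eq,
    Ne.symm hij, Ne.symm hik, Ne.symm hkj, hij, hik, hkj, not_false_eq_true,
    st_neg, mul_neg, neg_mul, neg_neg,
    zero_mul, mul_zero, add_zero, zero_add, neg_zero]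
  abel

/-- Elementary matrix as a unit. -/
def Eunit (i j : Fin d) (hij : i ≠ j) (r : R) : (Matrix (Fin d) (Fin d) R)ˣ where
  val := 1 + single i j r
  inv := 1 + single i j (-r)
  val_inv := by rw [M_mul i j hij]; simp
  inv_val := by rw [M_mul i j hij]; simp

lemma Eunit_mem (i j : Fin d) (hij : i ≠ j) (r : R) :
    Eunit i j hij r ∈ EL R d :=
  Subgroup.subset_closure ⟨i, j, r, hij, rfl⟩

/-- Elementary matrix as an element of `EL`. -/
def e (i j : Fin d) (hij : i ≠ j) (r : R) : EL R d :=
  ⟨Eunit i j hij r, Eunit_mem i j hij r⟩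

lemma e_coe (i j : Fin d) (hij : i ≠ j) (r : R) :
    (((e i j hij r : EL R d) : (Matrix (Fin d) (Fin d) R)ˣ) : Matrix (Fin d) (Fin d) R)
      = 1 + single i j r := rfl

lemma e_mul (i j : Fin d) (hij : i ≠ j) (r s : R) :
    e i j hij r * e i j hij s = e i j hij (r + s) :=
  Subtype.ext (Units.ext (M_mul i j hij r s))

lemma e_inv (i j : Fin d) (hij : i ≠ j) (r : R) :
    (e i j hij r)⁻¹ = e i j hij (-r) :=
  Subtype.ext (Units.ext rfl)

lemma e_zero (i j : Fin d) (hij : i ≠ j) : e i j hij (0 : R) = 1 :=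
  Subtype.ext (Units.ext (by simp [e, Eunit]))

lemma e_comm (i j k : Fin d) (hij : i ≠ j) (hik : i ≠ k) (hkj : k ≠ j) (r s : R) :
    e i k hik r * e k j hkj s * (e i k hik r)⁻¹ * (e k j hkj s)⁻¹
      = e i j hij (r * s) := by
  rw [e_inv, e_inv]
  exact Subtype.ext (Units.ext (comm_matrix i j k hij hik hkj r s))

variable (H : Subgroup (EL R d)) [H.Normal]

lemma mem_move1 (i j k : Fin d) (hij : i ≠ j) (hik : i ≠ k) (hkj : k ≠ j) (r s : R)
    (h : e i k hik r ∈ H) : e i j hij (r * s) ∈ H := by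
  rw [← e_comm i j k hij hik hkj r s]
  have h1 : e k j hkj s * (e i k hik r)⁻¹ * (e k j hkj s)⁻¹ ∈ H :=
    ‹H.Normal›.conj_mem _ (H.inv_mem h) _
  have h2 := H.mul_mem h h1
  rwa [← mul_assoc, ← mul_assoc] at h2

lemma mem_move2 (i j k : Fin d) (hij : i ≠ j) (hik : i ≠ k) (hkj : k ≠ j) (r s : R)
    (h : e k j hkj s ∈ H) : e i j hij (r * s) ∈ H := by
  rw [← e_comm i j k hij hik hkj r s]
  exact H.mul_mem (‹H.Normal›.conj_mem _ h _) (H.inv_mem h)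

lemma moveCol {i j k : Fin d} (hij : i ≠ j) (hik : i ≠ k) (hjk : j ≠ k) (r : R)
    (h : e i j hij r ∈ H) : e i k hik r ∈ H := by
  have := mem_move1 H i k j hik hij hjk r 1 h
  rwa [mul_one] at this

lemma moveRow {i j k : Fin d} (hij : i ≠ j) (hkj : k ≠ j) (hki : k ≠ i) (r : R)
    (h : e i j hij r ∈ H) : e k j hkj r ∈ H := by
  have := mem_move2 H k j i hkj hki hij 1 r h
  rwa [one_mul] at this

lemma exists_third (hd : 3 ≤ d) (i j : Fin d) : ∃ k : Fin d, k ≠ i ∧ k ≠ j := by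
  by_contra hcon
  push_neg at hcon
  have hsub : (Finset.univ : Finset (Fin d)) ⊆ {i, j} := by
    intro k _
    rcases eq_or_ne k i with rfl | hk
    · simp
    · simp [hcon k hk]
  have := Finset.card_le_card hsub
  have h2 : ({i, j} : Finset (Fin d)).card ≤ 2 :=
    le_trans (Finset.card_insert_le _ _) (by simp)
  simp only [Finset.card_univ, Fintype.card_fin] at this
  omega

lemma transfer (hd : 3 ≤ d) (i j i' j' : Fin d) (hij : i ≠ j) (h' : i' ≠ j') (r : R)
    (h : e i j hij r ∈ H) : e i' j' h' r ∈ H := by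
  rcases eq_or_ne i' i with rfl | hii
  · rcases eq_or_ne j' j with rfl | hjj
    · exact h
    · exact moveCol H hij h' (Ne.symm hjj) r h
  · rcases eq_or_ne j' j with rfl | hjj
    · exact moveRow H hij h' hii r h
    · rcases eq_or_ne i' j with rfl | hij'
      · rcases eq_or_ne j' i with rfl | hji'
        · obtain ⟨k, hki, hkj⟩ := exists_third hd j' i'
          have h1 : e j' k (Ne.symm hki) r ∈ H :=
            moveCol H hij (Ne.symm hki) (Ne.symm hkj) r h
          have h2 : e i' k (Ne.symm hkj) r ∈ H :=
            moveRow H (Ne.symm hki) (Ne.symm hkj) hij.symm r h1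
          exact moveCol H (Ne.symm hkj) h' hki r h2
        · have h1 : e i j' (Ne.symm hji') r ∈ H :=
            moveCol H hij (Ne.symm hji') (Ne.symm hjj) r h
          exact moveRow H (Ne.symm hji') h' hij.symm r h1
      · have h1 : e i' j hij' r ∈ H := moveRow H hij hij' hii r h
        exact moveCol H hij' h' (Ne.symm hjj) r h1

end ELAux

open ELAux in
theorem stmt_16 {R : Type*} [CommRing R] (d : ℕ) (hd : 3 ≤ d)
    (H : Subgroup (EL R d)) [H.Normal] [H.FiniteIndex] :
    ∃ U : Ideal R,
      (∀ (i j : Fin d), i ≠ j → ∀ r : R,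
        (r ∈ U ↔ ∃ u : EL R d,
          ((u : (Matrix (Fin d) (Fin d) R)ˣ) : Matrix (Fin d) (Fin d) R) =
            1 + Matrix.single i j r ∧ u ∈ H)) ∧
      Finite (R ⧸ U) := by
  set i0 : Fin d := ⟨0, by omega⟩ with hi0
  set j0 : Fin d := ⟨1, by omega⟩ with hj0
  have h01 : i0 ≠ j0 := by simp [hi0, hj0, Fin.ext_iff]
  refine ⟨{
    carrier := {r : R | e i0 j0 h01 r ∈ H}
    zero_mem' := by
      show e i0 j0 h01 (0 : R) ∈ H
      rw [e_zero]; exact H.one_mem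
    add_mem' := by
      intro a b ha hb
      show e i0 j0 h01 (a + b) ∈ H
      rw [← e_mul]
      exact H.mul_mem ha hb
    smul_mem' := by
      intro c r hr
      show e i0 j0 h01 (c • r) ∈ H
      obtain ⟨k, hk0, hk1⟩ := exists_third hd i0 j0
      have h1 : e i0 k (Ne.symm hk0) r ∈ H :=
        moveCol H h01 (Ne.symm hk0) (Ne.symm hk1) r hr
      have h2 : e i0 j0 h01 (r * c) ∈ H :=
        mem_move1 H i0 j0 k h01 (Ne.symm hk0) hk1 r c h1
      simpa [smul_eq_mul, mul_comm] using h2 }, ?_, ?_⟩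
  · intro i j hij r
    constructor
    · intro hr
      refine ⟨e i j hij r, rfl, ?_⟩
      exact transfer H hd i0 j0 i j h01 hij r hr
    · rintro ⟨u, hu, huH⟩
      have hue : u = e i j hij r := Subtype.ext (Units.ext hu)
      subst hue
      exact transfer H hd i j i0 j0 hij h01 r huH
  · have hfin : Finite (EL R d ⧸ H) := Subgroup.finite_quotient_of_finiteIndex (H := H)
    refine Finite.of_injective
      (fun x : R ⧸ _ => Quotient.liftOn' x
        (fun r => ((e i0 j0 h01 r : EL R d) : EL R d ⧸ H)) ?_) ?_
    · intro a b hab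
      have hab' : a - b ∈ {r : R | e i0 j0 h01 r ∈ H} := by
        have := (Submodule.quotientRel_def _).1 hab
        exact this
      refine (QuotientGroup.eq).2 ?_
      rw [e_inv, e_mul]
      have : e i0 j0 h01 (-(a - b)) ∈ H := by
        rw [show -(a - b) = -(a - b) from rfl]
        have := H.inv_mem hab'
        rwa [e_inv] at this
      simpa [neg_sub, sub_eq_neg_add] using this
    · intro x y hxy
      induction x using Quotient.inductionOn' with | h a =>
      induction y using Quotient.inductionOn' with | h b =>
      simp only [Quotient.liftOn'_mk''] at hxy
      have hmem : (e i0 j0 h01 a)⁻¹ * e i0 j0 h01 b ∈ H := (QuotientGroup.eq).1 hxy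
      rw [e_inv, e_mul] at hmem
      refine Quotient.sound' ?_
      refine (Submodule.quotientRel_def _).2 ?_
      show e i0 j0 h01 (a - b) ∈ H
      have := H.inv_mem hmem
      rw [e_inv] at this
      simpa [neg_add, sub_eq_add_neg, add_comm] using this
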